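/- Let v be a prime power and k ≥ t ≥ 2. Then there exists a covering array of strength t with k columns over v symbols having at most r·v^t rows, where r = ⌈((t−1)·lg k + lg(e·t)) / lg(1/(1 − c_{t,v}))⌉ and c_{t,v} = ∏_{i=0}^{t−1}(v^t − v^i)/(v^t − 1). Hence CAN(t,k,v) ≤ ⌈((t−1)lg k + lg(et))/lg(1/(1−c_{t,v}))⌉ · v^t. -/

import Mathlib

/-- An array `A` (rows `R`, columns `Fin k`) over an alphabet `S` covers a set `Q` of
columns if every assignment of symbols to the columns of `Q` occurs in some row. -/
def Covers {R : Type*} {k : ℕ} {S : Type*} (A : R → Fin k → S) (Q : Finset (Fin k)) : Prop :=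
  ∀ f : Fin k → S, ∃ r : R, ∀ j ∈ Q, A r j = f j

/-- The covering array number: the least `N` for which an `(N; t, k, v)`-covering array
exists. -/
noncomputable def CAN (t k v : ℕ) : ℕ :=
  sInf {N | ∃ A : Fin N → Fin k → Fin v,
    ∀ Q : Finset (Fin k), Q.card = t → Covers A Q}

open Finset
set_option maxHeartbeats 1600000
set_option linter.unusedSectionVars false
set_option linter.unusedVariables false
set_option linter.unnecessarySimpa false

section LLLsec
variable {ι V : Type*} [Fintype ι] [Fintype V] [DecidableEq ι] [DecidableEq V] [Nonempty V]

def IsLocalOn (A : Finset (ι → V)) (u : Finset ι) : Prop :=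
  ∀ ω σ : ι → V, (∀ j ∈ u, ω j = σ j) → ω ∈ A → σ ∈ A

lemma card_inter_mul_card (u : Finset ι) (A B : Finset (ι → V))
    (hA : IsLocalOn A u) (hB : IsLocalOn B uᶜ) :
    (A ∩ B).card * Fintype.card (ι → V) = A.card * B.card := by
  classical
  have key : ((A ∩ B) ×ˢ (Finset.univ : Finset (ι → V))).card = (A ×ˢ B).card := by
    apply Finset.card_nbij'
      (i := fun p => ((fun j => if j ∈ u then p.1 j else p.2 j : ι → V),
                      (fun j => if j ∈ u then p.2 j else p.1 j : ι → V)))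
      (j := fun p => ((fun j => if j ∈ u then p.1 j else p.2 j : ι → V),
                      (fun j => if j ∈ u then p.2 j else p.1 j : ι → V)))
    · intro p hp
      simp only [Finset.mem_coe, Finset.mem_product, Finset.mem_inter] at hp
      refine Finset.mem_product.2 ⟨?_, ?_⟩
      · exact hA p.1 _ (fun j hj => by simp [hj]) hp.1.1
      · refine hB p.1 _ (fun j hj => ?_) hp.1.2
        rw [Finset.mem_compl] at hj; simp [hj]
    · intro p hp
      simp only [Finset.mem_coe, Finset.mem_product] at hp
      refine Finset.mem_product.2 ⟨Finset.mem_inter.2 ⟨?_, ?_⟩, Finset.mem_univ _⟩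
      · exact hA p.1 _ (fun j hj => by simp [hj]) hp.1
      · refine hB p.2 _ (fun j hj => ?_) hp.2
        rw [Finset.mem_compl] at hj; simp [hj]
    · intro p hp
      have h1 : (fun j => if j ∈ u then (if j ∈ u then p.1 j else p.2 j) else
          (if j ∈ u then p.2 j else p.1 j) : ι → V) = p.1 := by
        ext j; by_cases hj : j ∈ u <;> simp [hj]
      have h2 : (fun j => if j ∈ u then (if j ∈ u then p.2 j else p.1 j) else
          (if j ∈ u then p.1 j else p.2 j) : ι → V) = p.2 := by
        ext j; by_cases hj : j ∈ u <;> simp [hj]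
      exact Prod.ext h1 h2
    · intro p hp
      have h1 : (fun j => if j ∈ u then (if j ∈ u then p.1 j else p.2 j) else
          (if j ∈ u then p.2 j else p.1 j) : ι → V) = p.1 := by
        ext j; by_cases hj : j ∈ u <;> simp [hj]
      have h2 : (fun j => if j ∈ u then (if j ∈ u then p.2 j else p.1 j) else
          (if j ∈ u then p.1 j else p.2 j) : ι → V) = p.2 := by
        ext j; by_cases hj : j ∈ u <;> simp [hj]
      exact Prod.ext h1 h2
  simpa [Finset.card_product, mul_comm] using key

def NT {I : Type*} (E : I → Finset (ι → V)) (T : Finset I) : Finset (ι → V) :=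
  Finset.univ.filter (fun ω => ∀ j ∈ T, ω ∉ E j)

lemma mem_NT {I : Type*} (E : I → Finset (ι → V)) (T : Finset I) (ω : ι → V) :
    ω ∈ NT E T ↔ ∀ j ∈ T, ω ∉ E j := by simp [NT]

lemma NT_empty {I : Type*} (E : I → Finset (ι → V)) : NT E (∅ : Finset I) = Finset.univ := by
  ext ω; simp [mem_NT]

lemma NT_insert {I : Type*} [DecidableEq I] (E : I → Finset (ι → V)) (T : Finset I) (a : I) :
    NT E (insert a T) = NT E T \ E a := by
  ext ω
  simp only [mem_NT, Finset.mem_sdiff, Finset.mem_insert]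
  constructor
  · intro h; exact ⟨fun j hj => h j (Or.inr hj), h a (Or.inl rfl)⟩
  · rintro ⟨h1, h2⟩ j (rfl | hj); exacts [h2, h1 j hj]

lemma NT_union {I : Type*} [DecidableEq I] (E : I → Finset (ι → V)) (T₁ T₂ : Finset I) :
    NT E (T₁ ∪ T₂) = NT E T₁ ∩ NT E T₂ := by
  ext ω
  simp only [mem_NT, Finset.mem_inter, Finset.mem_union]
  constructor
  · intro h; exact ⟨fun j hj => h j (Or.inl hj), fun j hj => h j (Or.inr hj)⟩
  · rintro ⟨h1, h2⟩ j (hj | hj); exacts [h1 j hj, h2 j hj]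

lemma NT_mono {I : Type*} (E : I → Finset (ι → V)) {T T' : Finset I} (h : T ⊆ T') :
    NT E T' ⊆ NT E T := fun ω hω => (mem_NT ..).2 fun j hj => (mem_NT ..).1 hω j (h hj)

theorem lovasz_local_lemma {I : Type*} [Fintype I] [DecidableEq I]
    (E : I → Finset (ι → V)) (S : I → Finset ι)
    (hloc : ∀ i, IsLocalOn (E i) (S i))
    (hSne : ∀ i, (S i).Nonempty)
    (D : ℕ) (hD : 2 ≤ D)
    (hΓ : ∀ i, (univ.filter (fun j => ((S i) ∩ (S j)).Nonempty)).card ≤ D)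
    (p : ℝ) (hp : ∀ i, ((E i).card : ℝ) ≤ p * Fintype.card (ι → V))
    (hpx : p ≤ (1 / D) * (1 - 1 / D) ^ (D - 1)) :
    ∃ ω : ι → V, ∀ i, ω ∉ E i := by
  classical
  have hΩ : (0 : ℝ) < Fintype.card (ι → V) := by exact_mod_cast Fintype.card_pos
  set P : Finset (ι → V) → ℝ := fun A => (A.card : ℝ) / Fintype.card (ι → V) with hPdef
  have hPnn : ∀ A, 0 ≤ P A := fun A => by positivity
  have hPuniv : P Finset.univ = 1 := by
    simp only [hPdef]
    rw [div_eq_one_iff_eq (ne_of_gt hΩ)]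
    simp [Finset.card_univ]
  have hPmono : ∀ {A B : Finset (ι → V)}, A ⊆ B → P A ≤ P B := by
    intro A B h
    have hc : (A.card : ℝ) ≤ B.card := by exact_mod_cast Finset.card_le_card h
    simp only [hPdef]
    gcongr
  -- difference identity
  have hPdiff : ∀ (T : Finset I) (a : I), a ∉ T →
      P (NT E (insert a T)) = P (NT E T) - P (E a ∩ NT E T) := by
    intro T a _
    have h1 : NT E (insert a T) = NT E T \ E a := NT_insert E T a
    have h2 : (NT E T \ E a).card + (NT E T ∩ E a).card = (NT E T).card :=
      Finset.card_sdiff_add_card_inter _ _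
    have h3 : ((NT E (insert a T)).card : ℝ) = (NT E T).card - (E a ∩ NT E T).card := by
      rw [h1, Finset.inter_comm]
      have := congrArg (fun n : ℕ => (n : ℝ)) h2
      push_cast at this
      linarith
    simp only [hPdef]
    rw [h3, sub_div]
  -- independence
  have hindep : ∀ (i : I) (T : Finset I), (∀ j ∈ T, ¬ (S i ∩ S j).Nonempty) →
      P (E i ∩ NT E T) = P (E i) * P (NT E T) := by
    intro i T hT
    have hB : IsLocalOn (NT E T) (S i)ᶜ := by
      intro ω σ hagree hω
      rw [mem_NT] at hω ⊢
      intro j hj hσ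
      have hsub : ∀ a ∈ S j, a ∈ (S i)ᶜ := by
        intro a ha
        rw [Finset.mem_compl]
        intro hai
        exact hT j hj ⟨a, Finset.mem_inter.2 ⟨hai, ha⟩⟩
      exact hω j hj (hloc j σ ω (fun a ha => (hagree a (hsub a ha)).symm) hσ)
    have := card_inter_mul_card (S i) (E i) (NT E T) (hloc i) hB
    have hcast : ((E i ∩ NT E T).card : ℝ) * Fintype.card (ι → V)
        = (E i).card * (NT E T).card := by exact_mod_cast this
    simp only [hPdef]
    rw [div_mul_div_comm, div_eq_div_iff (ne_of_gt hΩ) (by positivity)]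
    linear_combination (Fintype.card (ι → V) : ℝ) * hcast
  set x : ℝ := 1 / D with hxdef
  have hDpos : (0 : ℝ) < D := by
    have : (0:ℕ) < D := by omega
    exact_mod_cast this
  have hx0 : 0 < x := by rw [hxdef]; positivity
  have hx1 : x ≤ 1/2 := by
    rw [hxdef]
    rw [div_le_div_iff₀ hDpos (by norm_num)]
    have : (2:ℝ) ≤ D := by exact_mod_cast hD
    linarith
  have h1x0 : 0 < 1 - x := by linarith
  have h1x1 : 1 - x ≤ 1 := by linarith
  have hPle : ∀ i, P (E i) ≤ p := by
    intro i
    simp only [hPdef]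
    rw [div_le_iff₀ hΩ]
    exact hp i
  -- main claim
  have claim : ∀ n (T : Finset I), T.card ≤ n → ∀ i, i ∉ T →
      P (E i ∩ NT E T) ≤ x * P (NT E T) := by
    intro n
    induction n with
    | zero =>
      intro T hT i _
      have hTe : T = ∅ := Finset.card_eq_zero.1 (Nat.le_zero.1 hT)
      subst hTe
      rw [NT_empty, Finset.inter_univ, hPuniv, mul_one]
      calc P (E i) ≤ p := hPle i
        _ ≤ x * (1 - x) ^ (D - 1) := hpx
        _ ≤ x * 1 := by
            apply mul_le_mul_of_nonneg_left _ (le_of_lt hx0)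
            exact pow_le_one₀ (le_of_lt h1x0) h1x1
        _ = x := mul_one x
    | succ n ih =>
      intro T hT i hi
      set T₁ : Finset I := T.filter (fun j => (S i ∩ S j).Nonempty) with hT1def
      set T₂ : Finset I := T \ T₁ with hT2def
      have hT12 : T₁ ∪ T₂ = T := by
        rw [hT1def, hT2def]
        exact Finset.union_sdiff_of_subset (Finset.filter_subset _ _)
      have hT2sub : T₂ ⊆ T := Finset.sdiff_subset
      have hT2far : ∀ j ∈ T₂, ¬ (S i ∩ S j).Nonempty := by
        intro j hj
        rw [hT2def, Finset.mem_sdiff, hT1def, Finset.mem_filter] at hj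
        exact fun h => hj.2 ⟨hj.1, h⟩
      -- peeling
      have peel : ∀ (W : Finset I), W ⊆ T₁ →
          (1 - x) ^ W.card * P (NT E T₂) ≤ P (NT E (W ∪ T₂)) := by
        intro W
        induction W using Finset.induction_on with
        | empty =>
          intro _
          simp [Finset.empty_union]
        | @insert a W' haW' ihW =>
          intro hsub
          have hsubW' : W' ⊆ T₁ := fun z hz => hsub (Finset.mem_insert_of_mem hz)
          have haT1 : a ∈ T₁ := hsub (Finset.mem_insert_self a W')
          have haT2 : a ∉ T₂ := by
            rw [hT2def, Finset.mem_sdiff]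
            intro h; exact h.2 haT1
          have haU : a ∉ W' ∪ T₂ := by
            rw [Finset.mem_union]; rintro (h | h); exacts [haW' h, haT2 h]
          have hUcard : (W' ∪ T₂).card ≤ n := by
            have hsubT : W' ∪ T₂ ⊆ T.erase a := by
              intro z hz
              rw [Finset.mem_erase]
              constructor
              · rintro rfl; exact haU hz
              · rcases Finset.mem_union.1 hz with h | h
                exacts [Finset.filter_subset _ _ (hsubW' h), hT2sub h]
            calc (W' ∪ T₂).card ≤ (T.erase a).card := Finset.card_le_card hsubT
              _ = T.card - 1 := Finset.card_erase_of_mem (Finset.filter_subset _ _ haT1)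
              _ ≤ n := by omega
          have hstep := ih (W' ∪ T₂) hUcard a haU
          have hins : insert a W' ∪ T₂ = insert a (W' ∪ T₂) := by
            rw [Finset.insert_union]
          rw [hins, hPdiff (W' ∪ T₂) a haU]
          have hWc : (insert a W').card = W'.card + 1 := Finset.card_insert_of_notMem haW'
          rw [hWc, pow_succ]
          have h1 : (1 - x) ^ W'.card * P (NT E T₂) ≤ P (NT E (W' ∪ T₂)) := ihW hsubW'
          have h2 : P (E a ∩ NT E (W' ∪ T₂)) ≤ x * P (NT E (W' ∪ T₂)) := hstep
          nlinarith [hPnn (NT E (W' ∪ T₂)), hPnn (NT E T₂),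
            pow_nonneg (le_of_lt h1x0) W'.card]
      -- cardinality of T₁
      have hT1card : T₁.card ≤ D - 1 := by
        have hsub : T₁ ⊆ (univ.filter (fun j => (S i ∩ S j).Nonempty)).erase i := by
          intro z hz
          rw [Finset.mem_erase]
          constructor
          · rintro rfl; exact hi (Finset.filter_subset _ _ hz)
          · rw [hT1def, Finset.mem_filter] at hz
            exact Finset.mem_filter.2 ⟨Finset.mem_univ _, hz.2⟩
        have hiΓ : i ∈ univ.filter (fun j => (S i ∩ S j).Nonempty) := by
          refine Finset.mem_filter.2 ⟨Finset.mem_univ _, ?_⟩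
          obtain ⟨a, ha⟩ := hSne i
          exact ⟨a, Finset.mem_inter.2 ⟨ha, ha⟩⟩
        calc T₁.card ≤ ((univ.filter (fun j => (S i ∩ S j).Nonempty)).erase i).card :=
              Finset.card_le_card hsub
          _ = (univ.filter (fun j => (S i ∩ S j).Nonempty)).card - 1 :=
              Finset.card_erase_of_mem hiΓ
          _ ≤ D - 1 := by have := hΓ i; omega
      -- combine
      have step1 : P (E i ∩ NT E T) ≤ P (E i ∩ NT E T₂) :=
        hPmono (Finset.inter_subset_inter (le_refl _) (NT_mono E hT2sub))
      have step2 : P (E i ∩ NT E T₂) = P (E i) * P (NT E T₂) := hindep i T₂ hT2far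
      have step3 : P (E i) * P (NT E T₂) ≤ p * P (NT E T₂) :=
        mul_le_mul_of_nonneg_right (hPle i) (hPnn _)
      have step4 : p * P (NT E T₂) ≤ x * (1 - x) ^ (D - 1) * P (NT E T₂) :=
        mul_le_mul_of_nonneg_right hpx (hPnn _)
      have step5 : (1 - x) ^ (D - 1) ≤ (1 - x) ^ T₁.card :=
        pow_le_pow_of_le_one (le_of_lt h1x0) h1x1 hT1card
      have step6 : (1 - x) ^ T₁.card * P (NT E T₂) ≤ P (NT E T) := by
        have := peel T₁ (le_refl _)
        rwa [hT12] at this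
      calc P (E i ∩ NT E T) ≤ p * P (NT E T₂) := by
            rw [step2] at step1; linarith
        _ ≤ x * ((1 - x) ^ (D - 1) * P (NT E T₂)) := by rw [← mul_assoc]; exact step4
        _ ≤ x * ((1 - x) ^ T₁.card * P (NT E T₂)) := by
            apply mul_le_mul_of_nonneg_left _ (le_of_lt hx0)
            exact mul_le_mul_of_nonneg_right step5 (hPnn _)
        _ ≤ x * P (NT E T) := mul_le_mul_of_nonneg_left step6 (le_of_lt hx0)
  -- positivity of avoiding all events
  have pos : ∀ (T : Finset I), (1 - x) ^ T.card ≤ P (NT E T) := by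
    intro T
    induction T using Finset.induction_on with
    | empty => simp [NT_empty, hPuniv]
    | @insert a T haT ihT =>
      rw [hPdiff T a haT, Finset.card_insert_of_notMem haT, pow_succ]
      have h1 := claim T.card T (le_refl _) a haT
      nlinarith [hPnn (NT E T), pow_nonneg (le_of_lt h1x0) T.card]
  have hfin : 0 < P (NT E (univ : Finset I)) := by
    calc (0:ℝ) < (1 - x) ^ (univ : Finset I).card := pow_pos h1x0 _
      _ ≤ P (NT E univ) := pos univ
  have hcard : (NT E (univ : Finset I)).card ≠ 0 := by
    intro h
    rw [hPdef] at hfin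
    simp only [h] at hfin
    norm_num at hfin
  obtain ⟨ω, hω⟩ := Finset.card_ne_zero.1 hcard
  exact ⟨ω, fun i => (mem_NT E univ ω).1 hω i (Finset.mem_univ i)⟩



lemma card_cylinder' (u : Finset ι) (pred : ({j : ι // j ∈ u} → V) → Prop)
    [DecidablePred pred] :
    (Finset.univ.filter (fun ω : ι → V => pred (fun j => ω j.1))).card
      = (Finset.univ.filter pred).card * Fintype.card ({j : ι // j ∉ u} → V) := by
  classical
  rw [← Finset.card_univ (α := {j : ι // j ∉ u} → V), ← Finset.card_product]
  apply Finset.card_nbij'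
    (i := fun ω => ((fun j => ω j.1), (fun j => ω j.1)))
    (j := fun p => (fun a => if h : a ∈ u then p.1 ⟨a, h⟩ else p.2 ⟨a, h⟩))
  · intro ω hω
    rw [Finset.mem_coe, Finset.mem_filter] at hω
    exact Finset.mem_product.2 ⟨Finset.mem_filter.2 ⟨Finset.mem_univ _, hω.2⟩, Finset.mem_univ _⟩
  · intro p hp
    rw [Finset.mem_coe, Finset.mem_product, Finset.mem_filter] at hp
    refine Finset.mem_filter.2 ⟨Finset.mem_univ _, ?_⟩
    have : (fun (j : {j : ι // j ∈ u}) => if h : j.1 ∈ u then p.1 ⟨j.1, h⟩ else p.2 ⟨j.1, h⟩)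
        = p.1 := by
      funext j; simp [j.2]
    rw [this]; exact hp.1.2
  · intro ω hω
    funext a
    by_cases h : a ∈ u <;> simp [h]
  · intro p hp
    refine Prod.ext ?_ ?_
    · funext j; simp [j.2]
    · funext j; simp [j.2]

lemma card_filter_comp_equiv {α β V : Type*} [Fintype α] [Fintype β] [Fintype V] [DecidableEq α]
    [DecidableEq β] [DecidableEq V] (e : α ≃ β) (base : (α → V) → Prop) [DecidablePred base]
    [DecidablePred (fun h : β → V => base (fun a => h (e a)))] :
    (Finset.univ.filter (fun h : β → V => base (fun a => h (e a)))).card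
      = (Finset.univ.filter base).card := by
  classical
  apply Finset.card_nbij' (i := fun h => (fun a => h (e a))) (j := fun g => (fun b => g (e.symm b)))
  · intro h hh
    rw [Finset.mem_coe, Finset.mem_filter] at hh
    exact Finset.mem_filter.2 ⟨Finset.mem_univ _, hh.2⟩
  · intro g hg
    rw [Finset.mem_coe, Finset.mem_filter] at hg
    refine Finset.mem_filter.2 ⟨Finset.mem_univ _, ?_⟩
    have : (fun a => g (e.symm (e a))) = g := by funext a; simp
    rw [this]; exact hg.2
  · intro h _; funext b; simp
  · intro g _; funext a; simp


end LLLsec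

section LAsec
variable (F : Type*) [Field F] [Fintype F] [DecidableEq F]

open scoped Classical in
/-- counting tuples of nonzero vectors that are linearly independent -/
lemma card_LI_filter {Q : Type*} [Fintype Q] [DecidableEq Q] (t : ℕ)
    (hQ : Fintype.card Q = t) :
    (Finset.univ.filter (fun g : Q → {a : Fin t → F // a ≠ 0} =>
        LinearIndependent F (fun j => (g j).val))).card
      = ∏ i ∈ Finset.range t, (Fintype.card F ^ t - Fintype.card F ^ i) := by
  classical
  rw [← Fintype.card_subtype]
  have e1 : Fin t ≃ Q := (Fintype.equivFinOfCardEq hQ).symm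
  have E1 : {g : Q → {a : Fin t → F // a ≠ 0} // LinearIndependent F (fun j => (g j).val)}
      ≃ {g : Fin t → {a : Fin t → F // a ≠ 0} // LinearIndependent F (fun j => (g j).val)} :=
    { toFun := fun g => ⟨g.1 ∘ e1, (linearIndependent_equiv e1 (f := fun j => ((g.1 j).val))).2 g.2⟩
      invFun := fun g => ⟨g.1 ∘ e1.symm,
        (linearIndependent_equiv e1.symm (f := fun j => ((g.1 j).val))).2 g.2⟩
      left_inv := fun g => by
        ext j : 2
        simp
      right_inv := fun g => by
        ext j : 2
        simp }
  have E2 : {g : Fin t → {a : Fin t → F // a ≠ 0} // LinearIndependent F (fun j => (g j).val)}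
      ≃ {s : Fin t → (Fin t → F) // LinearIndependent F s} :=
    { toFun := fun g => ⟨fun j => (g.1 j).val, g.2⟩
      invFun := fun s => ⟨fun j => ⟨s.1 j, s.2.ne_zero j⟩, s.2⟩
      left_inv := fun g => by ext j : 2; rfl
      right_inv := fun s => by ext j : 2; rfl }
  have hfr : Module.finrank F (Fin t → F) = t := by
    rw [Module.finrank_pi]; exact Fintype.card_fin t
  have hcount := card_linearIndependent (K := F) (V := Fin t → F)
    (k := t) (by rw [hfr])
  rw [Fintype.card_congr (E1.trans E2)]
  rw [← Nat.card_eq_fintype_card, hcount, hfr]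
  rw [Finset.prod_range fun i => Fintype.card F ^ t - Fintype.card F ^ i]

/-- surjectivity onto the coordinates of a linearly independent family -/
lemma exists_preimage_of_li {Q : Type*} [Fintype Q] [DecidableEq Q] (t : ℕ) (ht : 0 < t)
    (hQ : Fintype.card Q = t) (a : Q → (Fin t → F))
    (ha : LinearIndependent F a) (g : Q → F) :
    ∃ x : Fin t → F, ∀ j : Q, ∑ i, a j i * x i = g j := by
  classical
  set Φ : (Fin t → F) →ₗ[F] (Q → F) :=
    LinearMap.pi (fun j => ∑ i, a j i • (LinearMap.proj i : (Fin t → F) →ₗ[F] F)) with hΦ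
  have hΦapply : ∀ (x : Fin t → F) (j : Q), Φ x j = ∑ i, a j i * x i := by
    intro x j
    simp [hΦ, LinearMap.pi_apply, LinearMap.sum_apply, LinearMap.smul_apply, smul_eq_mul]
  have hfr : Module.finrank F (Fin t → F) = t := by
    rw [Module.finrank_pi]; exact Fintype.card_fin t
  haveI : Nonempty Q := by
    rw [← Fintype.card_pos_iff, hQ]; exact ht
  have hinj : Function.Injective Φ := by
    rw [injective_iff_map_eq_zero]
    intro x hx
    set L : (Fin t → F) →ₗ[F] F :=
      ∑ i, x i • (LinearMap.proj i : (Fin t → F) →ₗ[F] F) with hL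
    have hLapply : ∀ y : Fin t → F, L y = ∑ i, x i * y i := by
      intro y; simp [hL, LinearMap.sum_apply, LinearMap.smul_apply, smul_eq_mul]
    have hb : Fintype.card Q = Module.finrank F (Fin t → F) := by rw [hQ, hfr]
    set b := basisOfLinearIndependentOfCardEqFinrank ha hb with hbdef
    have hbeq : ∀ j, b j = a j := fun j => by
      rw [hbdef, coe_basisOfLinearIndependentOfCardEqFinrank]
    have hL0 : L = 0 := by
      apply Module.Basis.ext b
      intro j
      rw [hbeq j, LinearMap.zero_apply, hLapply]
      have := congrFun hx j
      rw [hΦapply x j, Pi.zero_apply] at this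
      rw [← this]
      exact Finset.sum_congr rfl (fun i _ => mul_comm _ _)
    funext i
    have hxi : L (Pi.single i 1) = x i := by
      rw [hLapply]
      simp [Pi.single_apply, mul_ite]
    rw [hL0] at hxi
    simpa using hxi.symm
  have hcards : Fintype.card (Fin t → F) = Fintype.card (Q → F) := by
    rw [Fintype.card_fun, Fintype.card_fun, hQ, Fintype.card_fin]
  have hsurj : Function.Surjective Φ :=
    ((Fintype.bijective_iff_injective_and_card Φ).2 ⟨hinj, hcards⟩).2
  obtain ⟨x, hx⟩ := hsurj g
  exact ⟨x, fun j => by rw [← hΦapply x j, hx]⟩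


end LAsec

def prodSingletonEquiv {k r : ℕ} (Q : Finset (Fin k)) (s : Fin r) :
    {x // x ∈ Q} ≃ {j : Fin k × Fin r // j ∈ Q ×ˢ ({s} : Finset (Fin r))} :=
  { toFun := fun j => ⟨(j.1, s), Finset.mem_product.2 ⟨j.2, Finset.mem_singleton_self s⟩⟩
    invFun := fun j => ⟨j.1.1, (Finset.mem_product.1 j.2).1⟩
    left_inv := fun j => rfl
    right_inv := fun j => by
      have hs : j.1.2 = s := Finset.mem_singleton.1 (Finset.mem_product.1 j.2).2
      exact Subtype.ext (Prod.ext rfl hs.symm) }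

open scoped Classical in
lemma exists_coveringArray (F : Type*) [Field F] [Fintype F] [DecidableEq F]
    (t k r v : ℕ) (ht : 2 ≤ t) (hk : t ≤ k) (hr : 1 ≤ r) (hFv : Fintype.card F = v)
    (hpx : ((1 : ℝ) - ((∏ i ∈ Finset.range t, (v ^ t - v ^ i) : ℕ) : ℝ) /
        (((v ^ t - 1) ^ t : ℕ) : ℝ)) ^ r
      ≤ (1 / ((t * Nat.choose k (t - 1) : ℕ) : ℝ)) *
        (1 - 1 / ((t * Nat.choose k (t - 1) : ℕ) : ℝ)) ^ (t * Nat.choose k (t - 1) - 1)) :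
    ∃ A : Fin (r * v ^ t) → Fin k → Fin v,
      ∀ Q : Finset (Fin k), Q.card = t → Covers A Q := by
  classical
  have htpos : 0 < t := by omega
  haveI : Nontrivial F := inferInstance
  have hv2 : 2 ≤ v := by rw [← hFv]; exact Fintype.one_lt_card
  haveI : Nonempty {a : Fin t → F // a ≠ 0} := by
    refine ⟨⟨Pi.single ⟨0, htpos⟩ 1, ?_⟩⟩
    intro h
    have := congrFun h ⟨0, htpos⟩
    simp [Pi.single_apply] at this
  set M : ℕ := ∏ i ∈ Finset.range t, (v ^ t - v ^ i) with hM
  set D : ℕ := t * Nat.choose k (t - 1) with hD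
  have hDtwo : 2 ≤ D := by
    have h1 : 1 ≤ Nat.choose k (t - 1) := Nat.choose_pos (by omega)
    calc 2 ≤ t * 1 := by omega
      _ ≤ t * Nat.choose k (t - 1) := Nat.mul_le_mul_left t h1
  -- the events
  set E : {Q : Finset (Fin k) // Q.card = t} → Finset ((Fin k × Fin r) → {a : Fin t → F // a ≠ 0}) :=
    fun Q => Finset.univ.filter (fun ω => ∀ s : Fin r,
      ¬ LinearIndependent F (fun j : {x // x ∈ Q.1} => (ω (j.1, s)).val)) with hE
  set S : {Q : Finset (Fin k) // Q.card = t} → Finset (Fin k × Fin r) :=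
    fun Q => Q.1 ×ˢ Finset.univ with hS
  have hloc : ∀ Q, IsLocalOn (E Q) (S Q) := by
    intro Q ω σ hagree hω
    rw [hE] at hω ⊢
    simp only [Finset.mem_filter] at hω ⊢
    refine ⟨Finset.mem_univ _, fun s hLI => ?_⟩
    have hfam : (fun j : {x // x ∈ Q.1} => (σ (j.1, s)).val)
        = (fun j : {x // x ∈ Q.1} => (ω (j.1, s)).val) := by
      funext j
      rw [hagree (j.1, s) (Finset.mem_product.2 ⟨j.2, Finset.mem_univ _⟩)]
    rw [hfam] at hLI
    exact hω.2 s hLI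
  have hSne : ∀ Q, (S Q).Nonempty := by
    intro Q
    have hQne : Q.1.Nonempty := Finset.card_pos.1 (by rw [Q.2]; omega)
    obtain ⟨a, ha⟩ := hQne
    exact ⟨(a, ⟨0, hr⟩), Finset.mem_product.2 ⟨ha, Finset.mem_univ _⟩⟩
  have hΓ : ∀ Q, (Finset.univ.filter
      (fun Q' => ((S Q) ∩ (S Q')).Nonempty)).card ≤ D := by
    intro Q
    have hsub : Finset.univ.filter (fun Q' => ((S Q) ∩ (S Q')).Nonempty)
        ⊆ Q.1.biUnion (fun a => Finset.univ.filter
            (fun Q' : {Q : Finset (Fin k) // Q.card = t} => a ∈ Q'.1)) := by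
      intro Q' hQ'
      rw [Finset.mem_filter] at hQ'
      obtain ⟨z, hz⟩ := hQ'.2
      rw [Finset.mem_inter, hS] at hz
      simp only at hz
      obtain ⟨hz1, hz2⟩ := hz
      rw [Finset.mem_product] at hz1 hz2
      exact Finset.mem_biUnion.2 ⟨z.1, hz1.1,
        Finset.mem_filter.2 ⟨Finset.mem_univ _, hz2.1⟩⟩
    have hinner : ∀ a : Fin k, (Finset.univ.filter
        (fun Q' : {Q : Finset (Fin k) // Q.card = t} => a ∈ Q'.1)).card
          ≤ Nat.choose k (t - 1) := by
      intro a
      have hinj : ∀ Q₁ ∈ Finset.univ.filter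
          (fun Q' : {Q : Finset (Fin k) // Q.card = t} => a ∈ Q'.1),
          ∀ Q₂ ∈ Finset.univ.filter
          (fun Q' : {Q : Finset (Fin k) // Q.card = t} => a ∈ Q'.1),
          Q₁.1.erase a = Q₂.1.erase a → Q₁ = Q₂ := by
        intro Q₁ h₁ Q₂ h₂ heq
        rw [Finset.mem_filter] at h₁ h₂
        apply Subtype.ext
        rw [← Finset.insert_erase h₁.2, heq, Finset.insert_erase h₂.2]
      have hmaps : ∀ Q' ∈ Finset.univ.filter
          (fun Q' : {Q : Finset (Fin k) // Q.card = t} => a ∈ Q'.1),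
          Q'.1.erase a ∈ (Finset.univ : Finset (Fin k)).powersetCard (t - 1) := by
        intro Q' hQ'
        rw [Finset.mem_filter] at hQ'
        rw [Finset.mem_powersetCard]
        exact ⟨Finset.subset_univ _, by rw [Finset.card_erase_of_mem hQ'.2, Q'.2]⟩
      calc (Finset.univ.filter
          (fun Q' : {Q : Finset (Fin k) // Q.card = t} => a ∈ Q'.1)).card
          ≤ ((Finset.univ : Finset (Fin k)).powersetCard (t - 1)).card :=
            Finset.card_le_card_of_injOn _ hmaps hinj
        _ = Nat.choose k (t - 1) := by
            rw [Finset.card_powersetCard, Finset.card_univ, Fintype.card_fin]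
    calc (Finset.univ.filter (fun Q' => ((S Q) ∩ (S Q')).Nonempty)).card
        ≤ (Q.1.biUnion (fun a => Finset.univ.filter
            (fun Q' : {Q : Finset (Fin k) // Q.card = t} => a ∈ Q'.1))).card :=
          Finset.card_le_card hsub
      _ ≤ ∑ a ∈ Q.1, (Finset.univ.filter
            (fun Q' : {Q : Finset (Fin k) // Q.card = t} => a ∈ Q'.1)).card :=
          Finset.card_biUnion_le
      _ ≤ ∑ _a ∈ Q.1, Nat.choose k (t - 1) :=
          Finset.sum_le_sum (fun a _ => hinner a)
      _ = t * Nat.choose k (t - 1) := by rw [Finset.sum_const, Q.2, smul_eq_mul]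
      _ = D := by rw [hD]
  have hp : ∀ Q, ((E Q).card : ℝ)
      ≤ (((1 : ℝ) - (M : ℝ) / (((v ^ t - 1) ^ t : ℕ) : ℝ)) ^ r) *
        Fintype.card ((Fin k × Fin r) → {a : Fin t → F // a ≠ 0}) := by
    intro Q
    have hQc : Fintype.card {x // x ∈ Q.1} = t := by rw [Fintype.card_coe]; exact Q.2
    have hv1 : 1 ≤ v ^ t := Nat.one_le_pow _ _ (by omega)
    have hVz : Fintype.card {a : Fin t → F // a ≠ 0} = v ^ t - 1 := by
      have h1 : Fintype.card {a : Fin t → F // ¬ a = 0}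
          = Fintype.card (Fin t → F) - Fintype.card {a : Fin t → F // a = 0} :=
        Fintype.card_subtype_compl _
      have h2 : Fintype.card {a : Fin t → F // a = 0} = 1 := Fintype.card_subtype_eq 0
      have h3 : Fintype.card (Fin t → F) = v ^ t := by
        rw [Fintype.card_fun, hFv, Fintype.card_fin]
      simpa [h2, h3] using h1
    set Bf : Fin r → Finset ((Fin k × Fin r) → {a : Fin t → F // a ≠ 0}) :=
      fun s => Finset.univ.filter (fun ω => ¬ LinearIndependent F
        (fun j : {x // x ∈ Q.1} => (ω (j.1, s)).val)) with hBf
    -- Step 1 : single-copy count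
    have hMle : M ≤ (v ^ t - 1) ^ t := by
      have := card_LI_filter F (Q := {x // x ∈ Q.1}) t hQc
      rw [hFv] at this
      calc M = (Finset.univ.filter (fun g : {x // x ∈ Q.1} → {a : Fin t → F // a ≠ 0} =>
            LinearIndependent F (fun j => (g j).val))).card := by rw [this, hM]
        _ ≤ Fintype.card ({x // x ∈ Q.1} → {a : Fin t → F // a ≠ 0}) := by
            rw [← Finset.card_univ]; exact Finset.card_le_card (Finset.filter_subset _ _)
        _ = (v ^ t - 1) ^ t := by rw [Fintype.card_fun, hVz, hQc]
    have hBcard : ∀ s : Fin r, (Bf s).card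
        = ((v ^ t - 1) ^ t - M) * (Fintype.card {a : Fin t → F // a ≠ 0}) ^ (k * r - t) := by
      intro s
      have hucard : (Q.1 ×ˢ ({s} : Finset (Fin r))).card = t := by
        rw [Finset.card_product, Finset.card_singleton, Q.2, mul_one]
      have hrw : Bf s = Finset.univ.filter
          (fun ω : (Fin k × Fin r) → {a : Fin t → F // a ≠ 0} =>
            (fun h : {j : Fin k × Fin r // j ∈ Q.1 ×ˢ ({s} : Finset (Fin r))} → {a : Fin t → F // a ≠ 0} =>
              ¬ LinearIndependent F (fun jq : {x // x ∈ Q.1} => (h (prodSingletonEquiv Q.1 s jq)).val))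
            (fun j => ω j.1)) := by
        apply Finset.filter_congr
        intro ω _
        exact Iff.rfl
      rw [hrw, card_cylinder' (Q.1 ×ˢ ({s} : Finset (Fin r))) (fun h : {j : Fin k × Fin r // j ∈ Q.1 ×ˢ ({s} : Finset (Fin r))} → {a : Fin t → F // a ≠ 0} =>
        ¬ LinearIndependent F (fun jq : {x // x ∈ Q.1} => (h (prodSingletonEquiv Q.1 s jq)).val))]
      have hpos : (Finset.univ.filter
          (fun h : {j : Fin k × Fin r // j ∈ Q.1 ×ˢ ({s} : Finset (Fin r))} → {a : Fin t → F // a ≠ 0} =>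
            ¬ LinearIndependent F (fun jq : {x // x ∈ Q.1} => (h (prodSingletonEquiv Q.1 s jq)).val))).card
          = (v ^ t - 1) ^ t - M := by
        have hLIcount : (Finset.univ.filter
            (fun h : {j : Fin k × Fin r // j ∈ Q.1 ×ˢ ({s} : Finset (Fin r))} → {a : Fin t → F // a ≠ 0} =>
              LinearIndependent F (fun jq : {x // x ∈ Q.1} => (h (prodSingletonEquiv Q.1 s jq)).val))).card = M := by
          rw [card_filter_comp_equiv (prodSingletonEquiv Q.1 s)
            (fun g : {x // x ∈ Q.1} → {a : Fin t → F // a ≠ 0} =>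
              LinearIndependent F (fun j => (g j).val))]
          rw [card_LI_filter F t hQc, hFv, hM]
        have htot : Fintype.card ({j : Fin k × Fin r // j ∈ Q.1 ×ˢ ({s} : Finset (Fin r))} → {a : Fin t → F // a ≠ 0})
            = (v ^ t - 1) ^ t := by
          rw [Fintype.card_fun, hVz, Fintype.card_coe, hucard]
        have hnot : Finset.univ.filter
            (fun h : {j : Fin k × Fin r // j ∈ Q.1 ×ˢ ({s} : Finset (Fin r))} → {a : Fin t → F // a ≠ 0} =>
              ¬ LinearIndependent F (fun jq : {x // x ∈ Q.1} => (h (prodSingletonEquiv Q.1 s jq)).val))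
            = Finset.univ \ Finset.univ.filter
            (fun h : {j : Fin k × Fin r // j ∈ Q.1 ×ˢ ({s} : Finset (Fin r))} → {a : Fin t → F // a ≠ 0} =>
              LinearIndependent F (fun jq : {x // x ∈ Q.1} => (h (prodSingletonEquiv Q.1 s jq)).val)) :=
          Finset.filter_not _ _
        rw [hnot, Finset.card_sdiff_of_subset (Finset.filter_subset _ _), Finset.card_univ, htot, hLIcount]
      rw [hpos]
      congr 1
      have : Fintype.card {j : Fin k × Fin r // j ∉ Q.1 ×ˢ ({s} : Finset (Fin r))} = k * r - t := by
        have h1 : Fintype.card {j : Fin k × Fin r // ¬ j ∈ Q.1 ×ˢ ({s} : Finset (Fin r))}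
            = Fintype.card (Fin k × Fin r) - Fintype.card {j : Fin k × Fin r // j ∈ Q.1 ×ˢ ({s} : Finset (Fin r))} :=
          Fintype.card_subtype_compl _
        rw [Fintype.card_coe, hucard] at h1
        simpa using h1
      rw [Fintype.card_fun, this]
    -- Step 2 : independence over copies
    have claim : ∀ W : Finset (Fin r),
        (Finset.univ.filter (fun ω : (Fin k × Fin r) → {a : Fin t → F // a ≠ 0} =>
          ∀ s ∈ W, ¬ LinearIndependent F (fun j : {x // x ∈ Q.1} => (ω (j.1, s)).val))).card
          * (Fintype.card ((Fin k × Fin r) → {a : Fin t → F // a ≠ 0})) ^ W.card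
        = Fintype.card ((Fin k × Fin r) → {a : Fin t → F // a ≠ 0})
          * ∏ s ∈ W, (Bf s).card := by
      intro W
      induction W using Finset.induction_on with
      | empty => simp
      | @insert s W hsW ihW =>
        set Wfl : Finset ((Fin k × Fin r) → {a : Fin t → F // a ≠ 0}) :=
          Finset.univ.filter (fun ω => ∀ s' ∈ W, ¬ LinearIndependent F
            (fun j : {x // x ∈ Q.1} => (ω (j.1, s')).val)) with hWfl
        have hsplit : Finset.univ.filter
            (fun ω : (Fin k × Fin r) → {a : Fin t → F // a ≠ 0} =>
              ∀ s' ∈ insert s W, ¬ LinearIndependent F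
                (fun j : {x // x ∈ Q.1} => (ω (j.1, s')).val))
            = Bf s ∩ Wfl := by
          rw [hWfl]
          ext ω
          simp only [Finset.mem_filter, Finset.mem_inter, hBf, Finset.mem_univ, true_and,
            Finset.mem_insert]
          constructor
          · intro h; exact ⟨h s (Or.inl rfl), fun s' hs' => h s' (Or.inr hs')⟩
          · rintro ⟨h1, h2⟩ s' (rfl | hs'); exacts [h1, h2 s' hs']
        have hub : IsLocalOn (Bf s) (Q.1 ×ˢ ({s} : Finset (Fin r))) := by
          intro ω σ hagree hω
          rw [hBf] at hω ⊢
          simp only [Finset.mem_filter, Finset.mem_univ, true_and] at hω ⊢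
          intro hLI
          have hfam : (fun j : {x // x ∈ Q.1} => (σ (j.1, s)).val)
              = (fun j : {x // x ∈ Q.1} => (ω (j.1, s)).val) := by
            funext j
            rw [hagree (j.1, s) (Finset.mem_product.2 ⟨j.2, Finset.mem_singleton_self s⟩)]
          rw [hfam] at hLI
          exact hω hLI
        have hWloc : IsLocalOn Wfl (Q.1 ×ˢ ({s} : Finset (Fin r)))ᶜ := by
          intro ω σ hagree hω
          rw [hWfl] at hω ⊢
          simp only [Finset.mem_filter, Finset.mem_univ, true_and] at hω ⊢
          intro s' hs' hLI
          have hcoord : ∀ j : {x // x ∈ Q.1}, (j.1, s') ∈ (Q.1 ×ˢ ({s} : Finset (Fin r)))ᶜ := by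
            intro j
            rw [Finset.mem_compl]
            intro hmem
            have := Finset.mem_singleton.1 (Finset.mem_product.1 hmem).2
            exact hsW (this ▸ hs')
          have hfam : (fun j : {x // x ∈ Q.1} => (σ (j.1, s')).val)
              = (fun j : {x // x ∈ Q.1} => (ω (j.1, s')).val) := by
            funext j
            rw [hagree (j.1, s') (hcoord j)]
          rw [hfam] at hLI
          exact hω s' hs' hLI
        have hmul := card_inter_mul_card (Q.1 ×ˢ ({s} : Finset (Fin r))) (Bf s) Wfl hub hWloc
        rw [hsplit, Finset.card_insert_of_notMem hsW, pow_succ, Finset.prod_insert hsW]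
        calc (Bf s ∩ Wfl).card
            * ((Fintype.card ((Fin k × Fin r) → {a : Fin t → F // a ≠ 0})) ^ W.card
              * Fintype.card ((Fin k × Fin r) → {a : Fin t → F // a ≠ 0}))
            = ((Bf s ∩ Wfl).card * Fintype.card ((Fin k × Fin r) → {a : Fin t → F // a ≠ 0}))
              * (Fintype.card ((Fin k × Fin r) → {a : Fin t → F // a ≠ 0})) ^ W.card := by ring
          _ = ((Bf s).card * Wfl.card)
              * (Fintype.card ((Fin k × Fin r) → {a : Fin t → F // a ≠ 0})) ^ W.card := by
              rw [hmul]
          _ = (Bf s).card * (Wfl.card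
              * (Fintype.card ((Fin k × Fin r) → {a : Fin t → F // a ≠ 0})) ^ W.card) := by ring
          _ = (Bf s).card * (Fintype.card ((Fin k × Fin r) → {a : Fin t → F // a ≠ 0})
              * ∏ s' ∈ W, (Bf s').card) := by rw [ihW]
          _ = Fintype.card ((Fin k × Fin r) → {a : Fin t → F // a ≠ 0})
              * ((Bf s).card * ∏ s' ∈ W, (Bf s').card) := by ring
    -- Step 3 : specialize to W = univ
    have hEeq : E Q = Finset.univ.filter
        (fun ω : (Fin k × Fin r) → {a : Fin t → F // a ≠ 0} =>
          ∀ s ∈ (Finset.univ : Finset (Fin r)), ¬ LinearIndependent F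
            (fun j : {x // x ∈ Q.1} => (ω (j.1, s)).val)) := by
      rw [hE]
      apply Finset.filter_congr
      intro ω _
      simp
    have hkey := claim Finset.univ
    rw [← hEeq, Finset.card_univ, Fintype.card_fin] at hkey
    have hprod : ∏ s ∈ (Finset.univ : Finset (Fin r)), (Bf s).card
        = (((v ^ t - 1) ^ t - M) * (Fintype.card {a : Fin t → F // a ≠ 0}) ^ (k * r - t)) ^ r := by
      rw [Finset.prod_congr rfl (fun s _ => hBcard s), Finset.prod_const, Finset.card_univ,
        Fintype.card_fin]
    rw [hprod, hVz] at hkey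
    -- Step 4 : real arithmetic
    have hvt2 : 2 ≤ v ^ t := by
      calc 2 ≤ v := hv2
        _ = v ^ 1 := (pow_one v).symm
        _ ≤ v ^ t := Nat.pow_le_pow_right (by omega) (by omega)
    have hvt1 : (0:ℕ) < v ^ t - 1 := by omega
    have hΩc : Fintype.card ((Fin k × Fin r) → {a : Fin t → F // a ≠ 0})
        = (v ^ t - 1) ^ (k * r) := by
      rw [Fintype.card_fun, hVz, Fintype.card_prod, Fintype.card_fin, Fintype.card_fin]
    have htkr : t ≤ k * r := le_trans hk (Nat.le_mul_of_pos_right k hr)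
    have hWpow : (v ^ t - 1) ^ (k * r) = (v ^ t - 1) ^ t * (v ^ t - 1) ^ (k * r - t) := by
      rw [← pow_add]; congr 1; omega
    have hbpos : (0:ℝ) < ((v ^ t - 1 : ℕ) : ℝ) := by exact_mod_cast hvt1
    have hbt : (0:ℝ) < ((v ^ t - 1 : ℕ) : ℝ) ^ t := by positivity
    rw [hΩc] at hkey
    have hcast := congrArg (fun n : ℕ => (n : ℝ)) hkey
    simp only [Nat.cast_mul, Nat.cast_pow, Nat.cast_sub hMle] at hcast
    have hbkr : ((v ^ t - 1 : ℕ) : ℝ) ^ (k * r) = ((v ^ t - 1 : ℕ) : ℝ) ^ t * ((v ^ t - 1 : ℕ) : ℝ) ^ (k * r - t) := by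
      rw [← pow_add]; congr 1; omega
    have hX : (0:ℝ) < (((v ^ t - 1 : ℕ) : ℝ) ^ (k * r)) ^ r := by positivity
    have hfrac : (((v ^ t - 1 : ℕ) : ℝ) ^ t - (M:ℝ)) / ((v ^ t - 1 : ℕ) : ℝ) ^ t * ((v ^ t - 1 : ℕ) : ℝ) ^ (k * r)
        = (((v ^ t - 1 : ℕ) : ℝ) ^ t - (M:ℝ)) * ((v ^ t - 1 : ℕ) : ℝ) ^ (k * r - t) := by
      rw [hbkr, ← mul_assoc, div_mul_cancel₀ _ (ne_of_gt hbt)]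
    have hEeqR : (((E Q).card : ℕ) : ℝ)
        = ((((v ^ t - 1 : ℕ) : ℝ) ^ t - (M:ℝ)) / ((v ^ t - 1 : ℕ) : ℝ) ^ t) ^ r * ((v ^ t - 1 : ℕ) : ℝ) ^ (k * r) := by
      apply mul_right_cancel₀ (ne_of_gt hX)
      calc (((E Q).card : ℕ) : ℝ) * (((v ^ t - 1 : ℕ) : ℝ) ^ (k * r)) ^ r
          = ((v ^ t - 1 : ℕ) : ℝ) ^ (k * r) * ((((v ^ t - 1 : ℕ) : ℝ) ^ t - (M:ℝ)) * ((v ^ t - 1 : ℕ) : ℝ) ^ (k * r - t)) ^ r := hcast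
        _ = ((((v ^ t - 1 : ℕ) : ℝ) ^ t - (M:ℝ)) / ((v ^ t - 1 : ℕ) : ℝ) ^ t * ((v ^ t - 1 : ℕ) : ℝ) ^ (k * r)) ^ r * ((v ^ t - 1 : ℕ) : ℝ) ^ (k * r) := by
            rw [hfrac]; ring
        _ = ((((v ^ t - 1 : ℕ) : ℝ) ^ t - (M:ℝ)) / ((v ^ t - 1 : ℕ) : ℝ) ^ t) ^ r * ((v ^ t - 1 : ℕ) : ℝ) ^ (k * r) * (((v ^ t - 1 : ℕ) : ℝ) ^ (k * r)) ^ r := by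
            rw [mul_pow]; ring
    have honem : (((v ^ t - 1 : ℕ) : ℝ) ^ t - (M:ℝ)) / ((v ^ t - 1 : ℕ) : ℝ) ^ t = 1 - (M:ℝ) / ((v ^ t - 1 : ℕ) : ℝ) ^ t := by
      rw [sub_div, div_self (ne_of_gt hbt)]
    rw [Nat.cast_pow, hΩc, Nat.cast_pow, hEeqR, honem]
  obtain ⟨ω, hω⟩ := lovasz_local_lemma E S hloc hSne D hDtwo hΓ _ hp (by exact_mod_cast hpx)
  -- build the covering array
  have hcards : Fintype.card (Fin r × (Fin t → F)) = r * v ^ t := by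
    simp [Fintype.card_fun, hFv]
  set eN : Fin (r * v ^ t) ≃ Fin r × (Fin t → F) :=
    ((Fintype.equivFinOfCardEq hcards)).symm with heN
  set eF : F ≃ Fin v := Fintype.equivFinOfCardEq hFv with heF
  refine ⟨fun row j => eF (∑ i, (ω (j, (eN row).1)).val i * (eN row).2 i), ?_⟩
  intro Q hQ f
  have hQc : Fintype.card {x // x ∈ Q} = t := by rw [Fintype.card_coe]; exact hQ
  have hnE := hω ⟨Q, hQ⟩
  rw [hE] at hnE
  simp only [Finset.mem_filter, Finset.mem_univ, true_and, not_forall, not_not] at hnE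
  obtain ⟨s, hs⟩ := hnE
  obtain ⟨x, hx⟩ := exists_preimage_of_li F t htpos hQc
    (fun j : {x // x ∈ Q} => (ω (j.1, s)).val) hs (fun j => eF.symm (f j.1))
  refine ⟨eN.symm (s, x), fun j hj => ?_⟩
  have h1 : eN (eN.symm (s, x)) = (s, x) := Equiv.apply_symm_apply _ _
  simp only [h1]
  have h2 := hx ⟨j, hj⟩
  simp only at h2
  rw [h2]
  exact Equiv.apply_symm_apply eF (f j)


theorem CAN_upper_bound (t k v : ℕ) (ht : 2 ≤ t) (hk : t ≤ k) (hv : IsPrimePow v) :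
    (CAN t k v : ℝ) ≤
      (⌈(((t : ℝ) - 1) * Real.logb 2 k + Real.logb 2 (Real.exp 1 * t)) /
          Real.logb 2 (1 / (1 -
            ∏ i ∈ Finset.range t, ((v : ℝ) ^ t - (v : ℝ) ^ i) / ((v : ℝ) ^ t - 1)))⌉ : ℝ)
        * (v : ℝ) ^ t := by
  classical
  obtain ⟨q, m, hq, hm, hqm⟩ := hv
  have hqnat : q.Prime := Nat.prime_iff.2 hq
  haveI : Fact q.Prime := ⟨hqnat⟩
  haveI : Fintype (GaloisField q m) := Fintype.ofFinite _
  haveI : DecidableEq (GaloisField q m) := Classical.decEq _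
  have hF : Fintype.card (GaloisField q m) = v := by
    rw [← Nat.card_eq_fintype_card, GaloisField.card q m (by omega)]; exact hqm
  have hv2 : 2 ≤ v := by
    have := hqnat.two_le
    calc 2 ≤ q := this
      _ = q ^ 1 := (pow_one q).symm
      _ ≤ q ^ m := Nat.pow_le_pow_right (by omega) (by omega)
      _ = v := hqm
  have hvR : (2 : ℝ) ≤ (v : ℝ) := by exact_mod_cast hv2
  have hvt1R : (1 : ℝ) < (v : ℝ) ^ t := by
    calc (1:ℝ) < 2 := one_lt_two
      _ ≤ (v:ℝ) := hvR
      _ = (v:ℝ) ^ 1 := (pow_one _).symm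
      _ ≤ (v:ℝ) ^ t := pow_le_pow_right₀ (by linarith) (by omega)
  set c : ℝ := ∏ i ∈ Finset.range t, ((v : ℝ) ^ t - (v : ℝ) ^ i) / ((v : ℝ) ^ t - 1) with hc
  -- factor bounds
  have hfact_pos : ∀ i ∈ Finset.range t,
      0 < ((v : ℝ) ^ t - (v : ℝ) ^ i) / ((v : ℝ) ^ t - 1) := by
    intro i hi
    have hlt : (v:ℝ) ^ i < (v:ℝ) ^ t :=
      pow_lt_pow_right₀ (by linarith) (Finset.mem_range.1 hi)
    apply div_pos (by linarith) (by linarith)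
  have hfact_le : ∀ i ∈ Finset.range t,
      ((v : ℝ) ^ t - (v : ℝ) ^ i) / ((v : ℝ) ^ t - 1) ≤ 1 := by
    intro i hi
    rw [div_le_one (by linarith)]
    have : (1:ℝ) ≤ (v:ℝ) ^ i := one_le_pow₀ (by linarith)
    linarith
  have hc_pos : 0 < c := Finset.prod_pos hfact_pos
  have hc_lt1 : c < 1 := by
    have h1mem : 1 ∈ Finset.range t := Finset.mem_range.2 (by omega)
    rw [hc, ← Finset.mul_prod_erase _ _ h1mem]
    have hf1 : ((v : ℝ) ^ t - (v : ℝ) ^ 1) / ((v : ℝ) ^ t - 1) < 1 := by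
      rw [div_lt_one (by linarith)]
      rw [pow_one]
      linarith
    have hrest : ∏ i ∈ (Finset.range t).erase 1,
        ((v : ℝ) ^ t - (v : ℝ) ^ i) / ((v : ℝ) ^ t - 1) ≤ 1 :=
      Finset.prod_le_one (fun i hi => (hfact_pos i (Finset.mem_of_mem_erase hi)).le)
        (fun i hi => hfact_le i (Finset.mem_of_mem_erase hi))
    have hf1nn : 0 ≤ ((v : ℝ) ^ t - (v : ℝ) ^ 1) / ((v : ℝ) ^ t - 1) :=
      (hfact_pos 1 h1mem).le
    calc ((v : ℝ) ^ t - (v : ℝ) ^ 1) / ((v : ℝ) ^ t - 1) * ∏ i ∈ (Finset.range t).erase 1,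
          ((v : ℝ) ^ t - (v : ℝ) ^ i) / ((v : ℝ) ^ t - 1)
        ≤ ((v : ℝ) ^ t - (v : ℝ) ^ 1) / ((v : ℝ) ^ t - 1) * 1 :=
          mul_le_mul_of_nonneg_left hrest hf1nn
      _ < 1 := by rw [mul_one]; exact hf1
  have h1c_pos : 0 < 1 - c := by linarith
  -- cast form of c
  have hv1 : 1 ≤ v ^ t := Nat.one_le_pow _ _ (by omega)
  have hcM : c = ((∏ i ∈ Finset.range t, (v ^ t - v ^ i) : ℕ) : ℝ) /
      (((v ^ t - 1) ^ t : ℕ) : ℝ) := by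
    rw [hc, Finset.prod_div_distrib, Finset.prod_const, Finset.card_range]
    congr 1
    · rw [Nat.cast_prod]
      refine Finset.prod_congr rfl (fun i hi => ?_)
      rw [Nat.cast_sub (Nat.pow_le_pow_right (by omega) (Finset.mem_range.1 hi).le)]
      push_cast; ring
    · rw [Nat.cast_pow, Nat.cast_sub hv1]
      push_cast; ring
  -- logs
  set L : ℝ := Real.logb 2 (1 / (1 - c)) with hL
  have hLpos : 0 < L := by
    rw [hL]
    apply Real.logb_pos one_lt_two
    rw [lt_div_iff₀ h1c_pos]
    linarith
  set num : ℝ := ((t : ℝ) - 1) * Real.logb 2 k + Real.logb 2 (Real.exp 1 * t) with hnum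
  have hkR : (2:ℝ) ≤ (k:ℝ) := by
    have : 2 ≤ k := le_trans ht hk
    exact_mod_cast this
  have he1 : (2:ℝ) ≤ Real.exp 1 := by
    have := Real.add_one_le_exp 1
    linarith
  have htR : (2:ℝ) ≤ (t:ℝ) := by exact_mod_cast ht
  have hlogk : 0 < Real.logb 2 k := Real.logb_pos one_lt_two (by linarith)
  have hloget : 0 < Real.logb 2 (Real.exp 1 * t) :=
    Real.logb_pos one_lt_two (by nlinarith)
  have hnum_pos : 0 < num := by
    rw [hnum]
    have h1 : (1:ℝ) ≤ (t:ℝ) - 1 := by linarith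
    nlinarith
  set R : ℤ := ⌈num / L⌉ with hR
  have hR1 : 1 ≤ R := by
    have : 0 < R := by rw [hR]; exact Int.ceil_pos.2 (div_pos hnum_pos hLpos)
    omega
  set r : ℕ := R.toNat with hrdef
  have hr1 : 1 ≤ r := by omega
  have hrR : ((r : ℕ) : ℝ) = (R : ℝ) := by
    rw [hrdef]
    exact_mod_cast congrArg (fun z : ℤ => (z : ℝ)) (Int.toNat_of_nonneg (by omega))
  -- key chain
  set D : ℕ := t * Nat.choose k (t - 1) with hDdef
  have hD2 : 2 ≤ D := by
    have h1 : 1 ≤ Nat.choose k (t - 1) := Nat.choose_pos (by omega)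
    calc 2 ≤ t * 1 := by omega
      _ ≤ t * Nat.choose k (t - 1) := Nat.mul_le_mul_left t h1
  have hDR : (2:ℝ) ≤ (D:ℝ) := by exact_mod_cast hD2
  have hnum_le : num ≤ r * L := by
    have h1 : num / L ≤ (R:ℝ) := Int.le_ceil _
    rw [hrR]
    calc num = num / L * L := by field_simp
      _ ≤ (R:ℝ) * L := mul_le_mul_of_nonneg_right h1 hLpos.le
  have hnum_eq : num = Real.logb 2 (Real.exp 1 * t * (k:ℝ) ^ (t - 1)) := by
    have ht1 : ((t : ℝ) - 1) = ((t - 1 : ℕ) : ℝ) := by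
      rw [Nat.cast_sub (by omega)]; push_cast; ring
    rw [hnum, ht1]
    have h2 : ((t - 1 : ℕ) : ℝ) * Real.logb 2 k = Real.logb 2 ((k:ℝ) ^ (t - 1)) := by
      rw [Real.logb_pow]
    rw [h2, ← Real.logb_mul (by positivity) (by positivity)]
    rw [mul_comm ((k:ℝ) ^ (t-1)) (Real.exp 1 * t)]
  have hrL : (r:ℝ) * L = Real.logb 2 ((1 / (1 - c)) ^ r) := by
    rw [hL, Real.logb_pow]
  have hmono : Real.exp 1 * t * (k:ℝ) ^ (t - 1) ≤ (1 / (1 - c)) ^ r := by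
    have hlb : Real.logb 2 (Real.exp 1 * t * (k:ℝ) ^ (t - 1))
        ≤ Real.logb 2 ((1 / (1 - c)) ^ r) := by
      rw [← hnum_eq, ← hrL]; exact hnum_le
    have hapos : (0:ℝ) < Real.exp 1 * t * (k:ℝ) ^ (t - 1) := by positivity
    have hbpos : (0:ℝ) < (1 / (1 - c)) ^ r := by positivity
    calc Real.exp 1 * t * (k:ℝ) ^ (t - 1)
        = (2:ℝ) ^ Real.logb 2 (Real.exp 1 * t * (k:ℝ) ^ (t - 1)) :=
          (Real.rpow_logb two_pos (by norm_num) hapos).symm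
      _ ≤ (2:ℝ) ^ Real.logb 2 ((1 / (1 - c)) ^ r) :=
          Real.rpow_le_rpow_of_exponent_le one_le_two hlb
      _ = (1 / (1 - c)) ^ r := Real.rpow_logb two_pos (by norm_num) hbpos
  have hDpow : (D:ℝ) ≤ (t:ℝ) * (k:ℝ) ^ (t - 1) := by
    rw [hDdef]
    have := Nat.choose_le_pow k (t - 1)
    push_cast
    have hcast : ((Nat.choose k (t - 1) : ℕ) : ℝ) ≤ ((k ^ (t - 1) : ℕ) : ℝ) := by
      exact_mod_cast this
    push_cast at hcast
    nlinarith [htR]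
  have heD : Real.exp 1 * (D:ℝ) ≤ (1 / (1 - c)) ^ r := by
    calc Real.exp 1 * (D:ℝ) ≤ Real.exp 1 * ((t:ℝ) * (k:ℝ) ^ (t - 1)) :=
          mul_le_mul_of_nonneg_left hDpow (Real.exp_pos 1).le
      _ = Real.exp 1 * t * (k:ℝ) ^ (t - 1) := by ring
      _ ≤ (1 / (1 - c)) ^ r := hmono
  have hkey6 : (1 - c) ^ r ≤ 1 / (Real.exp 1 * D) := by
    have hpow_pos : (0:ℝ) < (1 - c) ^ r := pow_pos h1c_pos r
    have hinv : (1 / (1 - c)) ^ r = 1 / (1 - c) ^ r := by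
      rw [div_pow, one_pow]
    rw [hinv] at heD
    rw [le_div_iff₀ (by positivity)]
    calc (1 - c) ^ r * (Real.exp 1 * D) ≤ (1 - c) ^ r * (1 / (1 - c) ^ r) :=
          mul_le_mul_of_nonneg_left heD hpow_pos.le
      _ = 1 := by field_simp
  have hkey7 : 1 / (Real.exp 1 * (D:ℝ)) ≤ (1 / (D:ℝ)) * (1 - 1 / (D:ℝ)) ^ (D - 1) := by
    -- (1 - 1/D)^(D-1) ≥ 1/e
    have hm1 : 1 ≤ D - 1 := by omega
    have hmR : (1:ℝ) ≤ ((D - 1 : ℕ) : ℝ) := by exact_mod_cast hm1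
    have hmpos : (0:ℝ) < ((D - 1 : ℕ) : ℝ) := by linarith
    have hDcast : ((D - 1 : ℕ) : ℝ) = (D:ℝ) - 1 := by
      rw [Nat.cast_sub (by omega)]; push_cast; ring
    have hexp_step : (1 + 1 / ((D - 1 : ℕ) : ℝ)) ≤ Real.exp (1 / ((D - 1 : ℕ) : ℝ)) := by
      have := Real.add_one_le_exp (1 / ((D - 1 : ℕ) : ℝ))
      linarith
    have hexp_pow : (1 + 1 / ((D - 1 : ℕ) : ℝ)) ^ (D - 1) ≤ Real.exp 1 := by
      calc (1 + 1 / ((D - 1 : ℕ) : ℝ)) ^ (D - 1)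
          ≤ (Real.exp (1 / ((D - 1 : ℕ) : ℝ))) ^ (D - 1) :=
            pow_le_pow_left₀ (by positivity) hexp_step (D - 1)
        _ = Real.exp (((D - 1 : ℕ) : ℝ) * (1 / ((D - 1 : ℕ) : ℝ))) := by
            rw [Real.exp_nat_mul]
        _ = Real.exp 1 := by
            rw [mul_one_div, div_self (ne_of_gt hmpos)]
    have hbase : (1:ℝ) - 1 / (D:ℝ) = 1 / (1 + 1 / ((D - 1 : ℕ) : ℝ)) := by
      rw [hDcast]
      have hD0 : (D:ℝ) ≠ 0 := by linarith
      have hD10 : (D:ℝ) - 1 ≠ 0 := by linarith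
      field_simp
      rw [sub_add_cancel, div_self hD0]
    have honee : (1 - 1 / (D:ℝ)) ^ (D - 1) ≥ 1 / Real.exp 1 := by
      rw [hbase, div_pow, one_pow]
      exact one_div_le_one_div_of_le (by positivity) hexp_pow
    calc 1 / (Real.exp 1 * (D:ℝ)) = (1 / (D:ℝ)) * (1 / Real.exp 1) := by
          rw [one_div_mul_one_div]
          ring_nf
      _ ≤ (1 / (D:ℝ)) * (1 - 1 / (D:ℝ)) ^ (D - 1) :=
          mul_le_mul_of_nonneg_left honee (by positivity)
  have hpx' : ((1:ℝ) - c) ^ r ≤ (1 / (D:ℝ)) * (1 - 1 / (D:ℝ)) ^ (D - 1) :=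
    le_trans hkey6 hkey7
  obtain ⟨A, hA⟩ := exists_coveringArray (GaloisField q m) t k r v ht hk hr1 hF
    (by rw [← hcM]; exact hpx')
  have hCAN : CAN t k v ≤ r * v ^ t := Nat.sInf_le ⟨A, hA⟩
  have hfinal : (CAN t k v : ℝ) ≤ (r:ℝ) * ((v:ℝ)) ^ t := by exact_mod_cast hCAN
  calc (CAN t k v : ℝ) ≤ (r:ℝ) * ((v:ℝ)) ^ t := hfinal
    _ = (R:ℝ) * ((v:ℝ)) ^ t := by rw [hrR]
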